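/- For every real λ > 1 there exists a constant κ > 0 such that for all natural numbers m, n with 2 ≤ m ≤ n, setting T := λ·√(mn), one has n² · (T/(mn) − 1/T) · (1 − (1 − 1/T)^m − (m/T)·(1 − 1/T)^{m−1}) ≥ κ·√(mn). -/

import Mathlib

lemma binom_tail (x : ℝ) (hx0 : 0 ≤ x) (hx1 : x ≤ 1) (m : ℕ) (hm : 2 ≤ m) :
    ((m : ℝ) * ((m : ℝ) - 1) / 2) * x ^ 2 * (1 - x) ^ (m - 2) ≤
      1 - (1 - x) ^ m - (m : ℝ) * x * (1 - x) ^ (m - 1) := by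
  have hy : (0:ℝ) ≤ 1 - x := by linarith
  have expand : ∑ k ∈ Finset.range (m + 1), x ^ k * (1 - x) ^ (m - k) * (m.choose k) = 1 := by
    have := add_pow x (1 - x) m
    simpa using this.symm
  have hsub : Finset.range 3 ⊆ Finset.range (m + 1) := Finset.range_subset_range.2 (by omega)
  have key : ∑ k ∈ Finset.range 3, x ^ k * (1 - x) ^ (m - k) * (m.choose k) ≤
      ∑ k ∈ Finset.range (m + 1), x ^ k * (1 - x) ^ (m - k) * (m.choose k) := by
    refine Finset.sum_le_sum_of_subset_of_nonneg hsub ?_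
    intro i _ _
    positivity
  rw [expand] at key
  have hc2 : ((m.choose 2 : ℕ) : ℝ) = (m : ℝ) * ((m : ℝ) - 1) / 2 := Nat.cast_choose_two ℝ m
  simp [Finset.sum_range_succ, Nat.choose_one_right, hc2] at key
  linarith [key]

set_option maxHeartbeats 1000000 in
theorem main_analytic_estimate (lam : ℝ) (hlam : 1 < lam) :
    ∃ κ : ℝ, 0 < κ ∧ ∀ m n : ℕ, 2 ≤ m → m ≤ n → ∀ T : ℝ, T = lam * Real.sqrt (m * n) →
      κ * Real.sqrt (m * n) ≤
        (n : ℝ) ^ 2 * (T / (m * n) - 1 / T) *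
          (1 - (1 - 1 / T) ^ m - ((m : ℝ) / T) * (1 - 1 / T) ^ (m - 1)) := by
  have hl0 : (0:ℝ) < lam := by linarith
  have hK : (0:ℝ) < (lam ^ 2 - 1) * (lam - 1) := by
    have h1 : (0:ℝ) < lam - 1 := by linarith
    have h2 : (0:ℝ) < lam ^ 2 - 1 := by nlinarith
    exact mul_pos h2 h1
  refine ⟨(lam ^ 2 - 1) * (lam - 1) / (4 * lam ^ 4), by positivity, ?_⟩
  intro m n hm hmn T hTdef
  have hm' : (2:ℝ) ≤ m := by exact_mod_cast hm
  have hmn' : (m:ℝ) ≤ n := by exact_mod_cast hmn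
  have hmn0 : (0:ℝ) < (m:ℝ) * n := by nlinarith
  set s := Real.sqrt ((m:ℝ) * n) with hsdef
  have hs2 : s ^ 2 = (m:ℝ) * n := Real.sq_sqrt hmn0.le
  have hspos : 0 < s := Real.sqrt_pos.2 hmn0
  have hms : (m:ℝ) ≤ s := by nlinarith
  have hT0 : 0 < T := by rw [hTdef]; positivity
  have h1T : 1 ≤ T := by rw [hTdef]; nlinarith
  have hx0 : (0:ℝ) ≤ 1 / T := by positivity
  have hx1 : 1 / T ≤ 1 := by rw [div_le_one hT0]; exact h1T
  have hmT : (m:ℝ) / T ≤ 1 / lam := by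
    rw [div_le_div_iff₀ hT0 hl0, hTdef]
    nlinarith
  -- Bernoulli-type bound on (1 - 1/T)^(m-2)
  have hq : 1 - 1 / lam ≤ (1 - 1 / T) ^ (m - 2) := by
    have hcast : ((m - 2 : ℕ) : ℝ) = (m : ℝ) - 2 := by
      have := Nat.cast_sub hm (R := ℝ); simpa using this
    have hber : 1 + ((m - 2 : ℕ) : ℝ) * (-(1 / T)) ≤ (1 + -(1 / T)) ^ (m - 2) :=
      one_add_mul_le_pow (by linarith) (m - 2)
    rw [hcast] at hber
    have hsplit : ((m:ℝ) - 2) * (-(1 / T)) = -((m:ℝ) / T) + 2 / T := by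
      field_simp
      ring
    have h2T : (0:ℝ) ≤ 2 / T := by positivity
    have h2 : 1 - 1 / lam ≤ 1 + ((m:ℝ) - 2) * (-(1 / T)) := by
      rw [hsplit]; linarith [hmT]
    have hrw : (1:ℝ) + -(1 / T) = 1 - 1 / T := by ring
    rw [hrw] at hber
    linarith
  -- binomial tail lower bound
  have hB := binom_tail (1 / T) hx0 hx1 m hm
  have hC : ((m : ℝ) * ((m : ℝ) - 1) / 2) * (1 / T) ^ 2 * (1 - 1 / lam) ≤
      1 - (1 - 1 / T) ^ m - ((m : ℝ) / T) * (1 - 1 / T) ^ (m - 1) := by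
    have hcoef : (0:ℝ) ≤ ((m : ℝ) * ((m : ℝ) - 1) / 2) * (1 / T) ^ 2 := by
      have h1m : (1:ℝ) ≤ (m:ℝ) := by linarith
      have : (0:ℝ) ≤ (m:ℝ) - 1 := by linarith
      positivity
    have hmul := mul_le_mul_of_nonneg_left hq hcoef
    have heq : ((m : ℝ) / T) * (1 - 1 / T) ^ (m - 1) =
        (m:ℝ) * (1 / T) * (1 - 1 / T) ^ (m - 1) := by ring
    rw [heq]
    linarith
  -- middle factor is exactly (lam² − 1)/(lam·s)
  have hA : T / ((m:ℝ) * n) - 1 / T = (lam ^ 2 - 1) / (lam * s) := by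
    rw [hTdef, ← hs2]
    field_simp
  have hBpos : (0:ℝ) ≤ (n:ℝ) ^ 2 * ((lam ^ 2 - 1) / (lam * s)) := by
    have h1 : (0:ℝ) < lam ^ 2 - 1 := by nlinarith
    positivity
  calc (lam ^ 2 - 1) * (lam - 1) / (4 * lam ^ 4) * s
      ≤ (n:ℝ) ^ 2 * ((lam ^ 2 - 1) / (lam * s)) *
        (((m : ℝ) * ((m : ℝ) - 1) / 2) * (1 / T) ^ 2 * (1 - 1 / lam)) := by
        rw [hTdef]
        have hEq : (n:ℝ) ^ 2 * ((lam ^ 2 - 1) / (lam * s)) *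
            (((m : ℝ) * ((m : ℝ) - 1) / 2) * (1 / (lam * s)) ^ 2 * (1 - 1 / lam)) =
            (n:ℝ) ^ 2 * (m:ℝ) * ((m:ℝ) - 1) * ((lam ^ 2 - 1) * (lam - 1)) /
              (2 * lam ^ 4 * (s * s ^ 2)) := by
          field_simp
        rw [hEq, hs2]
        have hden : (0:ℝ) < 2 * lam ^ 4 * (s * ((m:ℝ) * n)) :=
          mul_pos (by positivity) (mul_pos hspos hmn0)
        rw [le_div_iff₀ hden]
        have hLHS : (lam ^ 2 - 1) * (lam - 1) / (4 * lam ^ 4) * s *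
            (2 * lam ^ 4 * (s * ((m:ℝ) * n))) =
            (lam ^ 2 - 1) * (lam - 1) * (s ^ 2 * ((m:ℝ) * n)) / 2 := by
          field_simp
          ring
        rw [hLHS, hs2]
        have hkey : (m:ℝ) * n * ((m:ℝ) * n) ≤ 2 * ((n:ℝ) ^ 2 * (m:ℝ) * ((m:ℝ) - 1)) := by
          nlinarith [mul_nonneg (mul_nonneg (sq_nonneg (n:ℝ)) (by linarith : (0:ℝ) ≤ (m:ℝ)))
            (by linarith : (0:ℝ) ≤ (m:ℝ) - 2)]
        nlinarith [mul_le_mul_of_nonneg_left hkey hK.le]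
    _ ≤ (n : ℝ) ^ 2 * (T / ((m:ℝ) * n) - 1 / T) *
          (1 - (1 - 1 / T) ^ m - ((m : ℝ) / T) * (1 - 1 / T) ^ (m - 1)) := by
        rw [hA]
        exact mul_le_mul_of_nonneg_left hC hBpos
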